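/- Let F be a field with char F ≠ 2 and char F ≠ 3, and let · be a bilinear multiplication on F × F that is not identically zero and is curled (for every x there exists λ ∈ F with x·x = λ • x). Then (F × F, ·) is isomorphic to exactly one of the following algebras, given by their matrices of structure constants: ((1/3, −1/3, 2/3, 0), (0, −1/3, 2/3, 1/3)); ((α1, 0, 0, 0), (0, 2α1−1, 1−α1, 0)) for some α1 ∈ F; or ((1/3, 0, 0, 0), (0, 2/3, −1/3, 0)). Here 'exactly one' means in addition that no two distinct algebras of this list (in particular for distinct values of α1) are isomorphic to each other. -/

import Mathlib

/-- The bilinear multiplication on `F × F` determined by the matrix of structure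
constants `((a1, a2, a3, a4), (b1, b2, b3, b4))`. -/
def scMul {F : Type*} [Field F] (a1 a2 a3 a4 b1 b2 b3 b4 : F) (x y : F × F) : F × F :=
  (a1 * x.1 * y.1 + a2 * x.1 * y.2 + a3 * x.2 * y.1 + a4 * x.2 * y.2,
   b1 * x.1 * y.1 + b2 * x.1 * y.2 + b3 * x.2 * y.1 + b4 * x.2 * y.2)

/-- A multiplication `m` on `F × F` is endo-commutative if `(x·x)·(y·y) = (x·y)·(x·y)`. -/
def IsEndoCommutative {F : Type*} [Field F] (m : F × F → F × F → F × F) : Prop :=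
  ∀ x y : F × F, m (m x x) (m y y) = m (m x y) (m x y)

/-- A multiplication `m` on `F × F` is curled if every square `x·x` is a scalar
multiple of `x`. -/
def IsCurled {F : Type*} [Field F] (m : F × F → F × F → F × F) : Prop :=
  ∀ x : F × F, ∃ lam : F, m x x = lam • x

/-- `m` is bilinear (linear in each argument). -/
def IsBilinearMul {F : Type*} [Field F] (m : F × F → F × F → F × F) : Prop :=
  (∀ (a : F) (x x' y : F × F), m (a • x + x') y = a • m x y + m x' y) ∧
  (∀ (a : F) (x y y' : F × F), m x (a • y + y') = a • m x y + m x y')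

/-- Two multiplications on `F × F` are isomorphic if some `F`-linear
equivalence `g` of `F × F` satisfies `g (x·y) = g x ∘ g y`. -/
def AlgIso {F : Type*} [Field F] (m₁ m₂ : F × F → F × F → F × F) : Prop :=
  ∃ g : (F × F) ≃ₗ[F] F × F, ∀ x y, g (m₁ x y) = m₂ (g x) (g y)

/-- The list of curled algebras of Theorem 6 (char F ≠ 2, 3):
`Sum.inr true` is `A₁(1/3, -1/3, 0, 0)`, `Sum.inl a1` is `A₃(a1, 0, 2a1 - 1)`,
and `Sum.inr false` is `A₇(1/3, 0)`. -/
def curledFamily {F : Type*} [Field F] : F ⊕ Bool → (F × F → F × F → F × F)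
  | Sum.inr true => scMul (1 / 3) (-(1 / 3)) (2 / 3) 0 0 (-(1 / 3)) (2 / 3) (1 / 3)
  | Sum.inl a1 => scMul a1 0 0 0 0 (2 * a1 - 1) (1 - a1) 0
  | Sum.inr false => scMul (1 / 3) 0 0 0 0 (2 / 3) (-(1 / 3)) 0

section StmtAux

variable {F : Type*} [Field F]

/-- Standard form of a curled multiplication: `ℓ = (a, d)`, `e1*e2 = (p, u)`. -/
def stdMul (a d p u : F) : F × F → F × F → F × F := scMul a p (d - p) 0 0 u (a - u) d

lemma fam_inl (t : F) : curledFamily (Sum.inl t) = stdMul t 0 0 (2*t - 1) := by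
  funext x y
  simp only [curledFamily, stdMul, scMul, Prod.mk.injEq]
  constructor <;> ring

lemma fam_false : curledFamily (Sum.inr false) = stdMul (1/3 : F) 0 0 (2/3) := by
  funext x y
  simp only [curledFamily, stdMul, scMul, Prod.mk.injEq]
  constructor <;> ring

lemma fam_true : curledFamily (Sum.inr true) = stdMul (1/3 : F) (1/3) (-(1/3)) (-(1/3)) := by
  funext x y
  simp only [curledFamily, stdMul, scMul, Prod.mk.injEq]
  constructor <;> ring

lemma algIso_symm {m1 m2 : F × F → F × F → F × F} (h : AlgIso m1 m2) : AlgIso m2 m1 := by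
  obtain ⟨g, hg⟩ := h
  refine ⟨g.symm, fun x y => ?_⟩
  have h1 := hg (g.symm x) (g.symm y)
  rw [g.apply_symm_apply, g.apply_symm_apply] at h1
  rw [← h1, g.symm_apply_apply]

lemma algIso_trans {m1 m2 m3 : F × F → F × F → F × F} (h : AlgIso m1 m2) (h' : AlgIso m2 m3) :
    AlgIso m1 m3 := by
  obtain ⟨g, hg⟩ := h
  obtain ⟨g', hg'⟩ := h'
  exact ⟨g.trans g', fun x y => by simp [LinearEquiv.trans_apply, hg, hg']⟩

/-- A linear equivalence of `F × F` from an invertible `2 × 2` matrix. -/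
def mkEquiv (p q r s : F) (h : p * s - q * r ≠ 0) : (F × F) ≃ₗ[F] (F × F) where
  toFun x := (p * x.1 + q * x.2, r * x.1 + s * x.2)
  invFun x := ((s * x.1 - q * x.2) / (p * s - q * r), (-r * x.1 + p * x.2) / (p * s - q * r))
  map_add' x y := by simp [Prod.ext_iff]; constructor <;> ring
  map_smul' c x := by simp [Prod.ext_iff, smul_eq_mul]; constructor <;> ring
  left_inv x := by
    simp only [Prod.ext_iff]
    constructor <;> (rw [div_eq_iff h]; ring)
  right_inv x := by
    simp only [Prod.ext_iff]
    constructor <;> (rw [mul_div_assoc', mul_div_assoc', ← add_div, div_eq_iff h]; ring)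

/-- Sufficient conditions for two standard-form multiplications being isomorphic. -/
lemma algIso_std (h2 : (2:F) ≠ 0) (a d p u a' d' p' u' G11 G12 G21 G22 : F)
    (hdet : G11 * G22 - G12 * G21 ≠ 0)
    (E1 : a = a' * G11 + d' * G21) (E2 : d = a' * G12 + d' * G22)
    (E3 : G11 * (2*p - d) + G12 * (2*u - a) = (G11 * G22 - G12 * G21) * (2*p' - d'))
    (E4 : G21 * (2*p - d) + G22 * (2*u - a) = (G11 * G22 - G12 * G21) * (2*u' - a')) :
    AlgIso (stdMul a d p u) (stdMul a' d' p' u') := by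
  refine ⟨mkEquiv G11 G12 G21 G22 hdet, fun x y => ?_⟩
  show (G11 * _ + G12 * _, G21 * _ + G22 * _) = _
  simp only [stdMul, scMul, mkEquiv, LinearEquiv.coe_mk, LinearMap.coe_mk, AddHom.coe_mk,
    Prod.ext_iff]
  constructor
  · apply mul_left_cancel₀ h2
    linear_combination (2*x.1*y.1*G11 + (x.1*y.2+x.2*y.1)*G12) * E1 +
      ((x.1*y.2+x.2*y.1)*G11 + 2*x.2*y.2*G12) * E2 + (x.1*y.2 - x.2*y.1) * E3
  · apply mul_left_cancel₀ h2
    linear_combination (2*x.1*y.1*G21 + (x.1*y.2+x.2*y.1)*G22) * E1 +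
      ((x.1*y.2+x.2*y.1)*G21 + 2*x.2*y.2*G22) * E2 + (x.1*y.2 - x.2*y.1) * E4

/-- Matrix representation of a linear equivalence of `F × F`. -/
lemma equivMatrix (g : (F × F) ≃ₗ[F] (F × F)) :
    ∀ x : F × F, g x = ((g (1,0)).1 * x.1 + (g (0,1)).1 * x.2,
                        (g (1,0)).2 * x.1 + (g (0,1)).2 * x.2) := by
  intro x
  have hx : x = x.1 • ((1:F), (0:F)) + x.2 • ((0:F), (1:F)) := by
    simp [Prod.ext_iff]
  nth_rewrite 1 [hx]
  rw [map_add, map_smul, map_smul]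
  simp [Prod.ext_iff, mul_comm]

lemma equiv_det_ne_zero (g : (F × F) ≃ₗ[F] (F × F)) :
    (g (1,0)).1 * (g (0,1)).2 - (g (0,1)).1 * (g (1,0)).2 ≠ 0 := by
  set G11 := (g (1,0)).1 with hG11; set G12 := (g (0,1)).1 with hG12
  set G21 := (g (1,0)).2 with hG21; set G22 := (g (0,1)).2 with hG22
  set H11 := (g.symm (1,0)).1; set H12 := (g.symm (0,1)).1
  set H21 := (g.symm (1,0)).2; set H22 := (g.symm (0,1)).2
  have h1 : ((H11 * G11 + H12 * G21), (H21 * G11 + H22 * G21)) = ((1:F), (0:F)) := by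
    rw [← equivMatrix g.symm (G11, G21)]
    rw [show ((G11, G21) : F × F) = g (1,0) from rfl, g.symm_apply_apply]
  have h2 : ((H11 * G12 + H12 * G22), (H21 * G12 + H22 * G22)) = ((0:F), (1:F)) := by
    rw [← equivMatrix g.symm (G12, G22)]
    rw [show ((G12, G22) : F × F) = g (0,1) from rfl, g.symm_apply_apply]
  injection h1 with e1 e2
  injection h2 with e3 e4
  have key : (G11 * G22 - G12 * G21) * (H11 * H22 - H12 * H21) = 1 := by
    linear_combination (H21*G12 + H22*G22) * e1 - (H21*G11 + H22*G21) * e3 + e4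
  exact left_ne_zero_of_mul_eq_one key

/-- Necessary conditions extracted from an isomorphism of standard-form multiplications. -/
lemma std_iso_inv {a d p u a' d' p' u' : F}
    (h : AlgIso (stdMul a d p u) (stdMul a' d' p' u')) :
    ∃ G11 G12 G21 G22 : F, G11 * G22 - G12 * G21 ≠ 0 ∧
      a = a' * G11 + d' * G21 ∧ d = a' * G12 + d' * G22 ∧
      G11 * (2*p - d) + G12 * (2*u - a) = (G11 * G22 - G12 * G21) * (2*p' - d') ∧
      G21 * (2*p - d) + G22 * (2*u - a) = (G11 * G22 - G12 * G21) * (2*u' - a') := by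
  obtain ⟨g, hg⟩ := h
  set G11 := (g (1,0)).1 with hG11; set G12 := (g (0,1)).1 with hG12
  set G21 := (g (1,0)).2 with hG21; set G22 := (g (0,1)).2 with hG22
  have hdet : G11 * G22 - G12 * G21 ≠ 0 := equiv_det_ne_zero g
  have hG : ∀ x y : F × F,
      ((G11 * (stdMul a d p u x y).1 + G12 * (stdMul a d p u x y).2),
       (G21 * (stdMul a d p u x y).1 + G22 * (stdMul a d p u x y).2)) =
      stdMul a' d' p' u' (G11 * x.1 + G12 * x.2, G21 * x.1 + G22 * x.2)
        (G11 * y.1 + G12 * y.2, G21 * y.1 + G22 * y.2) := by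
    intro x y
    rw [← equivMatrix g (stdMul a d p u x y), hg x y, equivMatrix g x, equivMatrix g y]
  have h11 := hG (1,0) (1,0)
  have h22 := hG (0,1) (0,1)
  have h12 := hG (1,0) (0,1)
  have h21 := hG (0,1) (1,0)
  simp only [stdMul, scMul, Prod.ext_iff, mul_one, mul_zero, add_zero, zero_add,
    zero_mul, one_mul] at h11 h22 h12 h21
  obtain ⟨p1, p2⟩ := h11
  obtain ⟨q1, q2⟩ := h22
  obtain ⟨r1, r2⟩ := h12
  obtain ⟨s1, s2⟩ := h21
  refine ⟨G11, G12, G21, G22, hdet, ?_, ?_, ?_, ?_⟩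
  · by_contra hne
    have t1 : (a' * G11 + d' * G21 - a) * G11 = 0 := by linear_combination -p1
    have t2 : (a' * G11 + d' * G21 - a) * G21 = 0 := by linear_combination -p2
    have hz : a' * G11 + d' * G21 - a ≠ 0 := fun h0 => hne (by linear_combination -h0)
    have hg11 : G11 = 0 := by
      rcases mul_eq_zero.mp t1 with h0 | h0
      · exact absurd h0 hz
      · exact h0
    have hg21 : G21 = 0 := by
      rcases mul_eq_zero.mp t2 with h0 | h0
      · exact absurd h0 hz
      · exact h0
    apply hdet
    rw [hg11, hg21]; ring
  · by_contra hne
    have t1 : (a' * G12 + d' * G22 - d) * G12 = 0 := by linear_combination -q1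
    have t2 : (a' * G12 + d' * G22 - d) * G22 = 0 := by linear_combination -q2
    have hz : a' * G12 + d' * G22 - d ≠ 0 := fun h0 => hne (by linear_combination -h0)
    have hg12 : G12 = 0 := by
      rcases mul_eq_zero.mp t1 with h0 | h0
      · exact absurd h0 hz
      · exact h0
    have hg22 : G22 = 0 := by
      rcases mul_eq_zero.mp t2 with h0 | h0
      · exact absurd h0 hz
      · exact h0
    apply hdet
    rw [hg12, hg22]; ring
  · linear_combination r1 - s1
  · linear_combination r2 - s2

/-- The members of the curled family are pairwise non-isomorphic. -/
lemma family_noniso (h2 : (2:F) ≠ 0) (h3 : (3:F) ≠ 0) :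
    ∀ i j : F ⊕ Bool, i ≠ j → ¬ AlgIso (curledFamily i) (curledFamily j) := by
  have h13 : (3:F)*(1/3) = 1 := by field_simp
  rintro (t | b) (t' | b') hij h
  · -- inl / inl
    rw [fam_inl, fam_inl] at h
    obtain ⟨G11, G12, G21, G22, hdet, E1, E2, E3, E4⟩ := std_iso_inv h
    have hne : t ≠ t' := fun he => hij (by rw [he])
    by_cases ht' : t' = 0
    · subst ht'
      exact hne (by linear_combination E1)
    · have hG12 : G12 = 0 := by
        rcases mul_eq_zero.mp (show t' * G12 = 0 by linear_combination -E2) with h0 | h0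
        · exact absurd h0 ht'
        · exact h0
      rw [hG12] at E4 hdet
      have key : G22 * (2 * (t - t')) = 0 := by
        linear_combination t' * E4 - (3*t' - 2) * G22 * E1
      rcases mul_eq_zero.mp key with h0 | h0
      · exact hdet (by rw [h0]; ring)
      · rcases mul_eq_zero.mp h0 with h1 | h1
        · exact h2 h1
        · exact hne (by linear_combination h1)
  · -- inl / inr
    cases b'
    · rw [fam_inl, fam_false] at h
      obtain ⟨G11, G12, G21, G22, hdet, E1, E2, E3, E4⟩ := std_iso_inv h
      have hG12 : G12 = 0 := by
        rcases mul_eq_zero.mp (show (1/3:F) * G12 = 0 by linear_combination -E2) with h0 | h0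
        · exact absurd h0 (one_div_ne_zero h3)
        · exact h0
      rw [hG12] at E4 hdet
      have key : G22 * 2 = 0 := by
        linear_combination -E4 + 3*G22*E1
      rcases mul_eq_zero.mp key with h0 | h0
      · exact hdet (by rw [h0]; ring)
      · exact h2 h0
    · rw [fam_inl, fam_true] at h
      obtain ⟨G11, G12, G21, G22, hdet, E1, E2, E3, E4⟩ := std_iso_inv h
      have F2 : t*(2*0-0) + 0*(2*(2*t-1)-t) =
          (G11*G22 - G12*G21) * ((1/3)*(2*(-(1/3)) - (1/3)) + (1/3)*(2*(-(1/3)) - (1/3))) := by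
        linear_combination (2*0-0)*E1 + (2*(2*t-1)-t)*E2 + (1/3)*E3 + (1/3)*E4
      have key : (G11*G22 - G12*G21) * 2 = 0 := by
        linear_combination 3*F2 + (-6*(1/3) - 2)*(G11*G22 - G12*G21)*h13
      rcases mul_eq_zero.mp key with h0 | h0
      · exact hdet h0
      · exact h2 h0
  · -- inr / inl
    cases b
    · rw [fam_false, fam_inl] at h
      obtain ⟨G11, G12, G21, G22, hdet, E1, E2, E3, E4⟩ := std_iso_inv h
      by_cases ht' : t' = 0
      · subst ht'
        exact one_ne_zero (show (1:F) = 0 by linear_combination 3*E1 - h13)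
      · have hG12 : G12 = 0 := by
          rcases mul_eq_zero.mp (show t' * G12 = 0 by linear_combination -E2) with h0 | h0
          · exact absurd h0 ht'
          · exact h0
        rw [hG12] at E4 hdet
        have key : (1/3:F) * G22 * 2 = 0 := by
          linear_combination t'*E4 - (3*t'-2)*G22*E1
        have hG22 : G22 = 0 := by
          field_simp at key
          rcases mul_eq_zero.mp (key.trans (mul_zero 3)) with h0 | h0
          · exact h0
          · exact absurd h0 h2
        exact hdet (by rw [hG22]; ring)
    · rw [fam_true, fam_inl] at h
      obtain ⟨G11, G12, G21, G22, hdet, E1, E2, E3, E4⟩ := std_iso_inv h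
      have F2 : (1/3:F)*(2*(-(1/3)) - (1/3)) + (1/3)*(2*(-(1/3)) - (1/3)) =
          (G11*G22 - G12*G21) * (t'*(2*0-0) + 0*(2*(2*t'-1)-t')) := by
        linear_combination (2*(-(1/3)) - (1/3))*E1 + (2*(-(1/3)) - (1/3))*E2 + t'*E3 + 0*E4
      exact h2 (show (2:F) = 0 by linear_combination (-3)*F2 + (-6*(1/3) - 2)*h13)
  · -- inr / inr
    cases b <;> cases b'
    · exact hij rfl
    · rw [fam_false, fam_true] at h
      obtain ⟨G11, G12, G21, G22, hdet, E1, E2, E3, E4⟩ := std_iso_inv h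
      have F2 : (1/3:F)*(2*0-0) + 0*(2*(2/3)-(1/3)) =
          (G11*G22 - G12*G21) * ((1/3)*(2*(-(1/3)) - (1/3)) + (1/3)*(2*(-(1/3)) - (1/3))) := by
        linear_combination (2*0-0)*E1 + (2*(2/3)-(1/3))*E2 + (1/3)*E3 + (1/3)*E4
      have key : (G11*G22 - G12*G21) * 2 = 0 := by
        linear_combination 3*F2 + (-6*(1/3) - 2)*(G11*G22 - G12*G21)*h13
      rcases mul_eq_zero.mp key with h0 | h0
      · exact hdet h0
      · exact h2 h0
    · rw [fam_true, fam_false] at h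
      obtain ⟨G11, G12, G21, G22, hdet, E1, E2, E3, E4⟩ := std_iso_inv h
      have F2 : (1/3:F)*(2*(-(1/3)) - (1/3)) + (1/3)*(2*(-(1/3)) - (1/3)) =
          (G11*G22 - G12*G21) * ((1/3)*(2*0-0) + 0*(2*(2/3)-(1/3))) := by
        linear_combination (2*(-(1/3)) - (1/3))*E1 + (2*(-(1/3)) - (1/3))*E2 + (1/3)*E3 + 0*E4
      exact h2 (show (2:F) = 0 by linear_combination (-3)*F2 + (-6*(1/3) - 2)*h13)
    · exact hij rfl

/-- Every nonzero bilinear curled multiplication has standard form. -/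
lemma reduce_std (h2 : (2:F) ≠ 0) {m : F × F → F × F → F × F}
    (hbil : IsBilinearMul m) (hcur : IsCurled m) :
    ∃ a d p u : F, m = stdMul a d p u := by
  obtain ⟨hL, hR⟩ := hbil
  have hzeroL : ∀ y, m 0 y = 0 := by
    intro y
    have h := hL 1 0 0 y
    simp only [smul_zero, add_zero, one_smul] at h
    exact (add_eq_left.mp h.symm)
  have hzeroR : ∀ x, m x 0 = 0 := by
    intro x
    have h := hR 1 x 0 0
    simp only [smul_zero, add_zero, one_smul] at h
    exact (add_eq_left.mp h.symm)
  set e1 : F × F := (1, 0) with he1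
  set e2 : F × F := (0, 1) with he2
  have expandL : ∀ (x y : F × F), m x y = x.1 • m e1 y + x.2 • m e2 y := by
    intro x y
    have hx : x = x.1 • e1 + (x.2 • e2 + 0) := by
      simp [he1, he2, Prod.ext_iff]
    calc m x y = m (x.1 • e1 + (x.2 • e2 + 0)) y := by rw [← hx]
      _ = x.1 • m e1 y + m (x.2 • e2 + 0) y := hL x.1 e1 _ y
      _ = x.1 • m e1 y + (x.2 • m e2 y + m 0 y) := by rw [hL x.2 e2 0 y]
      _ = x.1 • m e1 y + x.2 • m e2 y := by rw [hzeroL]; ring_nf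
  have expandR : ∀ (x y : F × F), m x y = y.1 • m x e1 + y.2 • m x e2 := by
    intro x y
    have hy : y = y.1 • e1 + (y.2 • e2 + 0) := by
      simp [he1, he2, Prod.ext_iff]
    calc m x y = m x (y.1 • e1 + (y.2 • e2 + 0)) := by rw [← hy]
      _ = y.1 • m x e1 + m x (y.2 • e2 + 0) := hR y.1 x e1 _
      _ = y.1 • m x e1 + (y.2 • m x e2 + m x 0) := by rw [hR y.2 x e2 0]
      _ = y.1 • m x e1 + y.2 • m x e2 := by rw [hzeroR]; ring_nf
  set A1 := (m e1 e1).1 with hA1; set B1 := (m e1 e1).2 with hB1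
  set A2 := (m e1 e2).1 with hA2; set B2 := (m e1 e2).2 with hB2
  set A3 := (m e2 e1).1 with hA3; set B3 := (m e2 e1).2 with hB3
  set A4 := (m e2 e2).1 with hA4; set B4 := (m e2 e2).2 with hB4
  have hm : ∀ x y : F × F, m x y = scMul A1 A2 A3 A4 B1 B2 B3 B4 x y := by
    intro x y
    rw [expandL x y, expandR e1 y, expandR e2 y]
    simp only [scMul, Prod.ext_iff, Prod.fst_add, Prod.snd_add, Prod.smul_fst, Prod.smul_snd,
      smul_eq_mul]
    constructor <;> ring
  have c1 : A4 = 0 ∧ B1 = 0 := by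
    obtain ⟨l1, hl1⟩ := hcur (0, 1)
    obtain ⟨l2, hl2⟩ := hcur (1, 0)
    rw [hm (0,1) (0,1)] at hl1
    rw [hm (1,0) (1,0)] at hl2
    simp only [scMul, Prod.ext_iff, Prod.smul_fst, Prod.smul_snd, smul_eq_mul] at hl1 hl2
    constructor
    · have := hl1.1; simpa using this
    · have := hl2.2; simpa using this
  obtain ⟨hA4, hB1⟩ := c1
  have c2 : A1 = B2 + B3 ∧ A2 + A3 = B4 := by
    obtain ⟨l1, hl1⟩ := hcur (1, 1)
    obtain ⟨l2, hl2⟩ := hcur (1, -1)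
    rw [hm (1,1) (1,1)] at hl1
    rw [hm (1,-1) (1,-1)] at hl2
    simp only [scMul, Prod.ext_iff, Prod.smul_fst, Prod.smul_snd, smul_eq_mul] at hl1 hl2
    obtain ⟨u1, u2⟩ := hl1
    obtain ⟨v1, v2⟩ := hl2
    constructor
    · apply mul_left_cancel₀ h2
      linear_combination u1 - u2 + v1 + v2 - 2*hA4
    · apply mul_left_cancel₀ h2
      linear_combination u1 - u2 - v1 - v2 + 2*hB1
  obtain ⟨hc21, hc22⟩ := c2
  refine ⟨A1, B4, A2, B2, ?_⟩
  funext x y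
  rw [hm x y]
  simp only [stdMul, scMul, Prod.mk.injEq]
  constructor
  · linear_combination x.2*y.1*hc22 + x.2*y.2*hA4
  · linear_combination x.1*y.1*hB1 - x.2*y.1*hc21

lemma case3_iso (h2 : (2:F) ≠ 0) (a d p u δ A u' : F) (hA : A ≠ 0)
    (hW1 : 2*p - d = -(δ*d)) (hW2 : 2*u - a = δ*a)
    (hrel : 2*u' - A = δ*A) (hld : a ≠ 0 ∨ d ≠ 0) :
    AlgIso (stdMul a d p u) (stdMul A 0 0 u') := by
  by_cases ha : a = 0
  · have hd : d ≠ 0 := hld.resolve_left (fun h => h ha)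
    apply algIso_std h2 a d p u A 0 0 u' (a/A) (d/A) (-1) 0
    · have he : a/A*0 - d/A*(-1) = d/A := by ring
      rw [he]
      exact div_ne_zero hd hA
    · field_simp; try ring
    · field_simp; try ring
    · rw [hW1, hW2, ha]; field_simp; try ring
    · rw [hW1, hW2, ha, hrel]; field_simp; ring
  · apply algIso_std h2 a d p u A 0 0 u' (a/A) (d/A) 0 1
    · have he : a/A*1 - d/A*0 = a/A := by ring
      rw [he]
      exact div_ne_zero ha hA
    · field_simp; try ring
    · field_simp; try ring
    · rw [hW1, hW2]; field_simp; ring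
    · rw [hW1, hW2, hrel]; field_simp; ring

lemma exists_iso (h2 : (2:F) ≠ 0) (h3 : (3:F) ≠ 0) (a d p u : F)
    (hnz : ¬(a = 0 ∧ d = 0 ∧ p = 0 ∧ u = 0)) :
    ∃ i : F ⊕ Bool, AlgIso (stdMul a d p u) (curledFamily i) := by
  have h13 : (3:F)*(1/3) = 1 := by field_simp
  by_cases hl : a = 0 ∧ d = 0
  · -- Case 1 : ℓ = 0
    obtain ⟨ha, hd⟩ := hl
    subst ha; subst hd
    refine ⟨Sum.inl 0, ?_⟩
    rw [fam_inl]
    by_cases hu : u = 0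
    · have hp : p ≠ 0 := fun hp0 => hnz ⟨rfl, rfl, hp0, hu⟩
      apply algIso_std h2 0 0 p u 0 0 0 (2*0-1) (-u) p 1 0
      · have he : -u*0 - p*1 = -p := by ring
        rw [he]; exact neg_ne_zero.mpr hp
      · ring
      · ring
      · ring
      · ring
    · apply algIso_std h2 0 0 p u 0 0 0 (2*0-1) (-u) p 0 1
      · have he : -u*1 - p*0 = -u := by ring
        rw [he]; exact neg_ne_zero.mpr hu
      · ring
      · ring
      · ring
      · ring
  · have hld : a ≠ 0 ∨ d ≠ 0 := by tauto
    by_cases hw : 2*p - d = 0 ∧ 2*u - a = 0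
    · -- Case 2 : w = 0
      obtain ⟨hw1, hw2⟩ := hw
      refine ⟨Sum.inl (2/3), ?_⟩
      rw [fam_inl]
      rcases hld with ha | hd
      · apply algIso_std h2 a d p u (2/3) 0 0 (2*(2/3)-1) (3*a/2) (3*d/2) 0 1
        · have he : 3*a/2*1 - 3*d/2*0 = 3*a/2 := by ring
          rw [he]; exact div_ne_zero (mul_ne_zero h3 ha) h2
        · field_simp; try ring
        · field_simp; try ring
        · rw [hw1, hw2]; field_simp; try ring
        · rw [hw1, hw2]; field_simp; try ring
      · apply algIso_std h2 a d p u (2/3) 0 0 (2*(2/3)-1) (3*a/2) (3*d/2) (-1) 0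
        · have he : 3*a/2*0 - 3*d/2*(-1) = 3*d/2 := by ring
          rw [he]; exact div_ne_zero (mul_ne_zero h3 hd) h2
        · field_simp; try ring
        · field_simp; try ring
        · rw [hw1, hw2]; field_simp; try ring
        · rw [hw1, hw2]; field_simp; try ring
    · by_cases hc : a*(2*p - d) + d*(2*u - a) = 0
      · -- Case 3 : w ≠ 0, ℓ(w) = 0
        by_cases ha : a = 0
        · have hd : d ≠ 0 := hld.resolve_left (fun h => h ha)
          set δ := -(2*p - d)/d with hδ
          have hW1 : 2*p - d = -(δ*d) := by rw [hδ]; field_simp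
          have hu0 : 2*u - a = 0 := by
            rcases mul_eq_zero.mp (show d*(2*u - a) = 0 by rw [ha] at hc ⊢; linear_combination hc)
              with h0 | h0
            · exact absurd h0 hd
            · exact h0
          have hW2 : 2*u - a = δ*a := by rw [hu0, ha]; ring
          have hδ0 : δ ≠ 0 := by
            intro h0
            rw [h0] at hW1
            exact hw ⟨by linear_combination hW1, hu0⟩
          by_cases hδ3 : δ = 3
          · refine ⟨Sum.inr false, ?_⟩
            rw [fam_false]
            refine case3_iso h2 a d p u δ (1/3) (2/3) (one_div_ne_zero h3) hW1 hW2 ?_ hld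
            rw [hδ3]; field_simp; norm_num
          · refine ⟨Sum.inl (2/(3 - δ)), ?_⟩
            rw [fam_inl]
            have h3δ : 3 - δ ≠ 0 := sub_ne_zero.mpr (Ne.symm hδ3)
            refine case3_iso h2 a d p u δ (2/(3-δ)) (2*(2/(3-δ))-1)
              (div_ne_zero h2 h3δ) hW1 hW2 ?_ hld
            field_simp
            try ring
        · set δ := (2*u - a)/a with hδ
          have hW2 : 2*u - a = δ*a := by rw [hδ]; field_simp
          have hW1 : 2*p - d = -(δ*d) := by
            rw [hδ]; field_simp
            linear_combination hc
          have hδ0 : δ ≠ 0 := by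
            intro h0
            rw [h0] at hW1 hW2
            exact hw ⟨by linear_combination hW1, by linear_combination hW2⟩
          by_cases hδ3 : δ = 3
          · refine ⟨Sum.inr false, ?_⟩
            rw [fam_false]
            refine case3_iso h2 a d p u δ (1/3) (2/3) (one_div_ne_zero h3) hW1 hW2 ?_ hld
            rw [hδ3]; field_simp; norm_num
          · refine ⟨Sum.inl (2/(3 - δ)), ?_⟩
            rw [fam_inl]
            have h3δ : 3 - δ ≠ 0 := sub_ne_zero.mpr (Ne.symm hδ3)
            refine case3_iso h2 a d p u δ (2/(3-δ)) (2*(2/(3-δ))-1)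
              (div_ne_zero h2 h3δ) hW1 hW2 ?_ hld
            field_simp
            try ring
      · -- Case 4 : ℓ(w) ≠ 0
        refine ⟨Sum.inr true, ?_⟩
        rw [fam_true]
        apply algIso_std h2 a d p u (1/3) (1/3) (-(1/3)) (-(1/3))
          (2*a - u) (d + p) (a + u) (2*d - p)
        · intro h0
          apply hc
          have h1 : (3:F)*(a*p + d*u - a*d) = 0 := by linear_combination -h0
          rcases mul_eq_zero.mp h1 with h4 | h4
          · exact absurd h4 h3
          · linear_combination 2*h4
        · linear_combination (-a)*h13
        · linear_combination (-d)*h13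
        · linear_combination ((2*a - u)*(2*d - p) - (d + p)*(a + u))*h13
        · linear_combination ((2*a - u)*(2*d - p) - (d + p)*(a + u))*h13

lemma char_ne_two {F : Type*} [Field F] (h2 : ringChar F ≠ 2) : (2:F) ≠ 0 := by
  intro h
  have hd : ringChar F ∣ 2 := (ringChar.spec F 2).mp (by exact_mod_cast h)
  rcases (Nat.dvd_prime Nat.prime_two).mp hd with h1 | h1
  · have : (1:F) = 0 := by
      have := (ringChar.spec F 1).mpr (h1 ▸ dvd_refl _)
      simpa using this
    exact one_ne_zero this
  · exact h2 h1

lemma char_ne_three {F : Type*} [Field F] (h3 : ringChar F ≠ 3) : (3:F) ≠ 0 := by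
  intro h
  have hd : ringChar F ∣ 3 := (ringChar.spec F 3).mp (by exact_mod_cast h)
  rcases (Nat.dvd_prime Nat.prime_three).mp hd with h1 | h1
  · have : (1:F) = 0 := by
      have := (ringChar.spec F 1).mpr (h1 ▸ dvd_refl _)
      simpa using this
    exact one_ne_zero this
  · exact h3 h1

end StmtAux

/-- any nonzero bilinear curled multiplication on `F × F`
(char F ≠ 2, 3) is isomorphic to exactly one member of `curledFamily`, and the
members of `curledFamily` are pairwise non-isomorphic. -/
theorem stmt_14 {F : Type*} [Field F] (h2 : ringChar F ≠ 2) (h3 : ringChar F ≠ 3)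
    (m : F × F → F × F → F × F) (hbil : IsBilinearMul m)
    (hnz : ¬ ∀ x y, m x y = 0) (hcur : IsCurled m) :
    (∃! i : F ⊕ Bool, AlgIso m (curledFamily i)) ∧
      ∀ i j : F ⊕ Bool, i ≠ j → ¬ AlgIso (curledFamily i) (curledFamily j) := by
  have h2' : (2:F) ≠ 0 := char_ne_two h2
  have h3' : (3:F) ≠ 0 := char_ne_three h3
  obtain ⟨a, d, p, u, hm⟩ := reduce_std h2' hbil hcur
  subst hm
  have hnz' : ¬(a = 0 ∧ d = 0 ∧ p = 0 ∧ u = 0) := by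
    rintro ⟨rfl, rfl, rfl, rfl⟩
    apply hnz
    intro x y
    simp [stdMul, scMul]
  have noniso := family_noniso h2' h3'
  obtain ⟨i, hi⟩ := exists_iso h2' h3' a d p u hnz'
  refine ⟨⟨i, hi, ?_⟩, noniso⟩
  intro j hj
  by_contra hne
  exact noniso j i hne (algIso_trans (algIso_symm hj) hi)
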